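/- Let G be a tree with n ≥ 2 vertices, let D be an orientation of G, and let a ≥ 1 be a real number. Then R⁰_{a+1}(D) ≤ (1/2)·[n − 1 + (n−1)^{1+a}], with equality if and only if D is one of the two sink-source orientations of the star K_{1,n−1} (all arcs out of the center, or all arcs into the center). -/
import Mathlib


/-- An orientation of a simple graph `G`: each edge `{u,v}` is replaced by exactly one
of the arcs `(u,v)` or `(v,u)`. -/
structure SimpleGraph.Orientation {V : Type*} (G : SimpleGraph V) where
  /-- the arc relation of the orientation -/
  arc : V → V → Prop
  adj_of_arc : ∀ u v, arc u v → G.Adj u v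
  arc_total : ∀ u v, G.Adj u v → arc u v ∨ arc v u
  arc_asymm : ∀ u v, arc u v → ¬ arc v u

namespace SimpleGraph.Orientation

variable {V : Type*} {G : SimpleGraph V} (D : G.Orientation)

/-- The out-degree of a vertex in the orientation. -/
noncomputable def outDeg (u : V) : ℕ := Set.ncard {v | D.arc u v}

/-- The in-degree of a vertex in the orientation. -/
noncomputable def inDeg (v : V) : ℕ := Set.ncard {u | D.arc u v}

/-- An orientation is sink-source if every vertex has out-degree 0 or in-degree 0. -/
def IsSinkSource : Prop := ∀ v : V, D.outDeg v = 0 ∨ D.inDeg v = 0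

open scoped Classical in
/-- The zeroth-order general Randić index `R⁰_{a+1}(D)` of an orientation:
`(1/2) ∑_{(u,v) arc} ((d⁺ u)^a + (d⁻ v)^a)`. -/
noncomputable def randic [Fintype V] (a : ℝ) : ℝ :=
  (1 / 2) * ∑ p ∈ Finset.univ.filter (fun p : V × V => D.arc p.1 p.2),
    ((D.outDeg p.1 : ℝ) ^ a + (D.inDeg p.2 : ℝ) ^ a)

end SimpleGraph.Orientation


section AuxRpow
open Finset Real Set

lemma rpow_split {p z : ℝ} (hz : 0 < z) : z ^ p = z * z ^ (p - 1) := by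
  nth_rewrite 1 [show p = 1 + (p - 1) by ring]
  rw [Real.rpow_add hz, Real.rpow_one]

lemma rpow_superadd_strict {p x y : ℝ} (hx : 0 < x) (hy : 0 < y) (hp : 1 < p) :
    x ^ p + y ^ p < (x + y) ^ p := by
  have hxy : (0:ℝ) < x + y := by linarith
  have h2 : x ^ (p - 1) < (x + y) ^ (p - 1) :=
    Real.rpow_lt_rpow hx.le (by linarith) (by linarith)
  have h3 : y ^ (p - 1) < (x + y) ^ (p - 1) :=
    Real.rpow_lt_rpow hy.le (by linarith) (by linarith)
  rw [rpow_split hx, rpow_split hy, rpow_split hxy, add_mul]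
  have := mul_lt_mul_of_pos_left h2 hx
  have := mul_lt_mul_of_pos_left h3 hy
  linarith

lemma rpow_superadd {p x y : ℝ} (hx : 0 ≤ x) (hy : 0 ≤ y) (hp : 1 < p) :
    x ^ p + y ^ p ≤ (x + y) ^ p := by
  rcases eq_or_lt_of_le hx with h | h
  · simp [← h, Real.zero_rpow (by linarith : p ≠ 0)]
  rcases eq_or_lt_of_le hy with h' | h'
  · simp [← h', Real.zero_rpow (by linarith : p ≠ 0)]
  exact (rpow_superadd_strict h h' hp).le

lemma shift_strictMono {p s : ℝ} (hs : 0 < s) (hp : 1 < p) :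
    StrictMonoOn (fun x : ℝ => (x + s) ^ p - x ^ p) (Set.Ici 1) := by
  have hderiv : ∀ x : ℝ, 0 < x → HasDerivAt (fun x : ℝ => (x + s) ^ p - x ^ p)
      (p * (x + s) ^ (p - 1) - p * x ^ (p - 1)) x := by
    intro x hx
    have h1 : HasDerivAt (fun x : ℝ => x + s) 1 x := (hasDerivAt_id x).add_const s
    have h2 : HasDerivAt (fun x : ℝ => (x + s) ^ p) (p * (x + s) ^ (p - 1)) x := by
      have := HasDerivAt.rpow_const h1 (Or.inr hp.le)
      simpa using this
    have h3 := (Real.hasDerivAt_rpow_const (Or.inl hx.ne') :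
      HasDerivAt (fun x : ℝ => x ^ p) (p * x ^ (p - 1)) x)
    exact h2.sub h3
  apply strictMonoOn_of_deriv_pos (convex_Ici 1)
  · exact fun x hx => ((hderiv x (by simp only [Set.mem_Ici] at hx; linarith)).continuousAt.continuousWithinAt)
  · intro x hx
    rw [interior_Ici] at hx
    have hx1 : (1:ℝ) < x := hx
    have hx0 : (0:ℝ) < x := by linarith
    rw [(hderiv x hx0).deriv]
    have : x ^ (p - 1) < (x + s) ^ (p - 1) :=
      Real.rpow_lt_rpow hx0.le (by linarith) (by linarith)
    have hp0 : (0:ℝ) < p := by linarith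
    nlinarith

lemma gsuper_strict {p s t : ℝ} (hs : 0 < s) (ht : 0 < t) (hp : 1 < p) :
    (1 + s) ^ p + (1 + t) ^ p < 1 + (1 + s + t) ^ p := by
  have h := (shift_strictMono hs hp) (Set.self_mem_Ici) (by simp [ht.le] : (1 + t) ∈ Set.Ici (1:ℝ))
    (by linarith)
  simp only at h
  have e1 : (1:ℝ) + s + t = 1 + t + s := by ring
  rw [Real.one_rpow] at h
  -- h : (1 + s)^p - 1 < (1 + t + s)^p - (1 + t)^p
  rw [e1]
  linarith

lemma gsuper {p s t : ℝ} (hs : 0 ≤ s) (ht : 0 ≤ t) (hp : 1 < p) :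
    (1 + s) ^ p + (1 + t) ^ p ≤ 1 + (1 + s + t) ^ p := by
  rcases eq_or_lt_of_le hs with h | h
  · rw [← h]; simp [Real.one_rpow]
  rcases eq_or_lt_of_le ht with h' | h'
  · rw [← h']; simp only [add_zero, Real.one_rpow]; linarith
  exact (gsuper_strict h h' hp).le

lemma sum_g_le {ι : Type*} {p : ℝ} (hp : 1 < p) (s : Finset ι) (f : ι → ℝ)
    (hf : ∀ i ∈ s, 0 ≤ f i) :
    ∑ i ∈ s, ((1 + f i) ^ p - 1) ≤ (1 + ∑ i ∈ s, f i) ^ p - 1 := by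
  classical
  induction s using Finset.induction_on with
  | empty => simp [Real.one_rpow]
  | @insert i s hi ih =>
    rw [Finset.sum_insert hi, Finset.sum_insert hi]
    have h1 := ih (fun j hj => hf j (Finset.mem_insert_of_mem hj))
    have h2 := gsuper (hf i (Finset.mem_insert_self i s))
      (Finset.sum_nonneg (fun j hj => hf j (Finset.mem_insert_of_mem hj))) hp
    rw [show (1:ℝ) + (f i + ∑ x ∈ s, f x) = 1 + f i + ∑ x ∈ s, f x by ring]
    linarith

lemma sum_g_eq_unique {ι : Type*} {p : ℝ} (hp : 1 < p) (s : Finset ι) (f : ι → ℝ)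
    (hf : ∀ i ∈ s, 0 ≤ f i)
    (heq : ∑ i ∈ s, ((1 + f i) ^ p - 1) = (1 + ∑ i ∈ s, f i) ^ p - 1)
    {i j : ι} (hi : i ∈ s) (hj : j ∈ s) (hij : i ≠ j)
    (hfi : 0 < f i) (hfj : 0 < f j) : False := by
  classical
  have hrest : 0 < ∑ k ∈ s.erase i, f k := by
    have h1 : f j ≤ ∑ k ∈ s.erase i, f k :=
      Finset.single_le_sum (fun k hk => hf k (Finset.mem_of_mem_erase hk))
        (Finset.mem_erase.2 ⟨hij.symm, hj⟩)
    linarith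
  have h2 : ∑ k ∈ s.erase i, ((1 + f k) ^ p - 1) ≤ (1 + ∑ k ∈ s.erase i, f k) ^ p - 1 :=
    sum_g_le hp _ _ (fun k hk => hf k (Finset.mem_of_mem_erase hk))
  have h3 := gsuper_strict hfi hrest hp
  have e1 : ∑ k ∈ s, ((1 + f k) ^ p - 1) =
      ((1 + f i) ^ p - 1) + ∑ k ∈ s.erase i, ((1 + f k) ^ p - 1) :=
    (Finset.add_sum_erase s _ hi).symm
  have e2 : ∑ k ∈ s, f k = f i + ∑ k ∈ s.erase i, f k := (Finset.add_sum_erase s f hi).symm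
  rw [e1, e2] at heq
  rw [show (1:ℝ) + (f i + ∑ k ∈ s.erase i, f k) = 1 + f i + ∑ k ∈ s.erase i, f k by ring] at heq
  linarith

end AuxRpow

section AuxSums

lemma sum_pow_single {V : Type*} [Fintype V] {f : V → ℕ} {c : V}
    (h0 : ∀ u, u ≠ c → f u = 0) {q : ℝ} (hq : q ≠ 0) :
    ∑ u : V, (f u : ℝ) ^ q = (f c : ℝ) ^ q := by
  apply Finset.sum_eq_single_of_mem c (Finset.mem_univ c)
  intro b _ hb
  rw [h0 b hb]
  simp [Real.zero_rpow hq]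

lemma sum_pow_ones {V : Type*} [Fintype V] {f : V → ℕ} {c : V}
    (hc : f c = 0) (h1 : ∀ u, u ≠ c → f u = 1) {q : ℝ} (hq : q ≠ 0) :
    ∑ u : V, (f u : ℝ) ^ q = ((Fintype.card V - 1 : ℕ) : ℝ) := by
  classical
  rw [← Finset.add_sum_erase _ _ (Finset.mem_univ c), hc]
  simp only [Nat.cast_zero, Real.zero_rpow hq, zero_add]
  rw [Finset.sum_congr rfl (fun u hu => by
    rw [h1 u (Finset.mem_erase.1 hu).1, Nat.cast_one, Real.one_rpow])]
  rw [Finset.sum_const, Finset.card_erase_of_mem (Finset.mem_univ c), Finset.card_univ]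
  simp

end AuxSums

namespace SimpleGraph.Orientation

variable {V : Type*} {G : SimpleGraph V} (D : G.Orientation)

open scoped Classical

lemma outDeg_eq [Fintype V] (u : V) :
    D.outDeg u = (Finset.univ.filter fun v => D.arc u v).card := by
  rw [outDeg, Set.ncard_eq_toFinset_card', Set.toFinset_setOf]

lemma inDeg_eq [Fintype V] (v : V) :
    D.inDeg v = (Finset.univ.filter fun u => D.arc u v).card := by
  rw [inDeg, Set.ncard_eq_toFinset_card', Set.toFinset_setOf]

lemma nat_mul_rpow {m : ℕ} {a : ℝ} (ha : 1 + a ≠ 0) :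
    (m : ℝ) * (m : ℝ) ^ a = (m : ℝ) ^ (1 + a) := by
  rcases Nat.eq_zero_or_pos m with h | h
  · simp [h, Real.zero_rpow ha]
  · have hm : (0:ℝ) < m := by exact_mod_cast h
    rw [Real.rpow_add hm, Real.rpow_one]

lemma randic_eq [Fintype V] (a : ℝ) (ha : 1 + a ≠ 0) : D.randic a =
    (1/2) * ((∑ u : V, (D.outDeg u : ℝ) ^ (1 + a)) + ∑ u : V, (D.inDeg u : ℝ) ^ (1 + a)) := by
  rw [randic]
  congr 1
  rw [Finset.sum_filter, ← Finset.univ_product_univ, Finset.sum_product]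
  have key : ∀ u v : V, (if D.arc u v then (D.outDeg u : ℝ) ^ a + (D.inDeg v : ℝ) ^ a else 0)
      = (if D.arc u v then (D.outDeg u : ℝ) ^ a else 0)
        + (if D.arc u v then (D.inDeg v : ℝ) ^ a else 0) := by
    intro u v; split <;> simp
  simp only [key, Finset.sum_add_distrib]
  congr 1
  · apply Finset.sum_congr rfl
    intro u _
    rw [← Finset.sum_filter, Finset.sum_const, nsmul_eq_mul, ← outDeg_eq,
      nat_mul_rpow ha]
  · rw [Finset.sum_comm]
    apply Finset.sum_congr rfl
    intro v _
    rw [← Finset.sum_filter, Finset.sum_const, nsmul_eq_mul, ← inDeg_eq,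
      nat_mul_rpow ha]

lemma degree_eq [Fintype V] (u : V) : G.degree u = D.outDeg u + D.inDeg u := by
  rw [← SimpleGraph.card_neighborFinset_eq_degree, outDeg_eq, inDeg_eq]
  have h : G.neighborFinset u =
      (Finset.univ.filter fun v => D.arc u v) ∪ (Finset.univ.filter fun v => D.arc v u) := by
    ext v
    simp only [SimpleGraph.mem_neighborFinset, Finset.mem_union, Finset.mem_filter,
      Finset.mem_univ, true_and]
    constructor
    · exact fun h => D.arc_total u v h
    · rintro (h | h)
      · exact D.adj_of_arc u v h
      · exact (D.adj_of_arc v u h).symm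
  rw [h, Finset.card_union_of_disjoint]
  rw [Finset.disjoint_filter]
  intro v _ hv
  exact D.arc_asymm u v hv

lemma outDeg_eq_zero_iff [Fintype V] (u : V) :
    D.outDeg u = 0 ↔ ∀ v, ¬ D.arc u v := by
  rw [outDeg_eq, Finset.card_eq_zero, Finset.filter_eq_empty_iff]
  simp

lemma inDeg_eq_zero_iff [Fintype V] (u : V) :
    D.inDeg u = 0 ↔ ∀ v, ¬ D.arc v u := by
  rw [inDeg_eq, Finset.card_eq_zero, Finset.filter_eq_empty_iff]
  simp


lemma arc_iff_out {c : V}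
    (hadj : ∀ x y : V, G.Adj x y ↔ ((x = c ∧ y ≠ c) ∨ (y = c ∧ x ≠ c)))
    (harc : ∀ v : V, v ≠ c → D.arc c v) (u v : V) :
    D.arc u v ↔ (u = c ∧ v ≠ c) := by
  constructor
  · intro h
    rcases (hadj u v).1 (D.adj_of_arc u v h) with ⟨h1, h2⟩ | ⟨h1, h2⟩
    · exact ⟨h1, h2⟩
    · exact absurd h (by subst h1; exact D.arc_asymm _ _ (harc u h2))
  · rintro ⟨h1, h2⟩; subst h1; exact harc v h2

lemma arc_iff_in {c : V}
    (hadj : ∀ x y : V, G.Adj x y ↔ ((x = c ∧ y ≠ c) ∨ (y = c ∧ x ≠ c)))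
    (harc : ∀ v : V, v ≠ c → D.arc v c) (u v : V) :
    D.arc u v ↔ (v = c ∧ u ≠ c) := by
  constructor
  · intro h
    rcases (hadj u v).1 (D.adj_of_arc u v h) with ⟨h1, h2⟩ | ⟨h1, h2⟩
    · exact absurd h (by subst h1; exact D.arc_asymm _ _ (harc v h2))
    · exact ⟨h1, h2⟩
  · rintro ⟨h1, h2⟩; subst h1; exact harc u h2

lemma star_out_degs [Fintype V] {c : V}
    (harc : ∀ u v, D.arc u v ↔ (u = c ∧ v ≠ c)) :
    D.outDeg c = Fintype.card V - 1 ∧ (∀ u ≠ c, D.outDeg u = 0) ∧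
      D.inDeg c = 0 ∧ (∀ u ≠ c, D.inDeg u = 1) := by
  refine ⟨?_, ?_, ?_, ?_⟩
  · rw [outDeg_eq]
    have : (Finset.univ.filter fun v => D.arc c v) = Finset.univ.erase c := by
      ext v
      simp [harc, Finset.mem_erase]
    rw [this, Finset.card_erase_of_mem (Finset.mem_univ c), Finset.card_univ]
  · intro u hu
    rw [outDeg_eq]
    have : (Finset.univ.filter fun v => D.arc u v) = ∅ := by
      ext v; simp [harc, hu]
    simp [this]
  · rw [inDeg_eq]
    have : (Finset.univ.filter fun u => D.arc u c) = ∅ := by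
      ext u; simp [harc]
    simp [this]
  · intro u hu
    rw [inDeg_eq]
    have : (Finset.univ.filter fun w => D.arc w u) = {c} := by
      ext w; simp [harc, hu]
    simp [this]

lemma star_in_degs [Fintype V] {c : V}
    (harc : ∀ u v, D.arc u v ↔ (v = c ∧ u ≠ c)) :
    D.inDeg c = Fintype.card V - 1 ∧ (∀ u ≠ c, D.inDeg u = 0) ∧
      D.outDeg c = 0 ∧ (∀ u ≠ c, D.outDeg u = 1) := by
  refine ⟨?_, ?_, ?_, ?_⟩
  · rw [inDeg_eq]
    have : (Finset.univ.filter fun u => D.arc u c) = Finset.univ.erase c := by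
      ext u; simp [harc, Finset.mem_erase]
    rw [this, Finset.card_erase_of_mem (Finset.mem_univ c), Finset.card_univ]
  · intro u hu
    rw [inDeg_eq]
    have : (Finset.univ.filter fun w => D.arc w u) = ∅ := by
      ext w; simp [harc, hu]
    simp [this]
  · rw [outDeg_eq]
    have : (Finset.univ.filter fun v => D.arc c v) = ∅ := by
      ext v; simp [harc]
    simp [this]
  · intro u hu
    rw [outDeg_eq]
    have : (Finset.univ.filter fun v => D.arc u v) = {c} := by
      ext v; simp [harc, hu]
    simp [this]


end SimpleGraph.Orientation

/-- an orientation of a tree on `n ≥ 2` vertices satisfies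
`R⁰_{a+1}(D) ≤ (1/2)(n - 1 + (n-1)^(1+a))`, with equality iff `D` is one of the two
sink-source orientations of the star `K_{1,n-1}`. -/
theorem oriented_tree_randic_le {V : Type*} [Fintype V] (G : SimpleGraph V) (n : ℕ)
    (hn : Fintype.card V = n) (hn2 : 2 ≤ n) (htree : G.IsTree)
    (D : G.Orientation) (a : ℝ) (ha : 1 ≤ a) :
    D.randic a ≤ (1 / 2) * ((n : ℝ) - 1 + ((n : ℝ) - 1) ^ (1 + a)) ∧
    (D.randic a = (1 / 2) * ((n : ℝ) - 1 + ((n : ℝ) - 1) ^ (1 + a)) ↔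
      ∃ c : V, (∀ x y : V, G.Adj x y ↔ ((x = c ∧ y ≠ c) ∨ (y = c ∧ x ≠ c))) ∧
        ((∀ v : V, v ≠ c → D.arc c v) ∨ (∀ v : V, v ≠ c → D.arc v c))) := by
  classical
  have hp1 : 1 < 1 + a := by linarith
  have hp0 : 1 + a ≠ 0 := by linarith
  have hcard : 1 < Fintype.card V := by omega
  -- every vertex has degree at least 1
  have hdeg1 : ∀ u : V, 1 ≤ G.degree u := by
    intro u
    obtain ⟨v, hv⟩ := Fintype.exists_ne_of_one_lt_card hcard u
    obtain ⟨w⟩ := htree.isConnected.preconnected u v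
    have hlen : 0 < w.length := by
      rcases Nat.eq_zero_or_pos w.length with h | h
      · exact absurd (SimpleGraph.Walk.eq_of_length_eq_zero h) (Ne.symm hv)
      · exact h
    have hadjuv := w.adj_getVert_succ hlen
    rw [w.getVert_zero] at hadjuv
    exact (SimpleGraph.degree_pos_iff_exists_adj G u).2 ⟨_, hadjuv⟩
  have hdeglt : ∀ u : V, G.degree u < n := fun u => hn ▸ G.degree_lt_card_verts u
  -- sum of degrees
  have hsumdeg : ∑ u : V, G.degree u = 2 * (n - 1) := by
    rw [SimpleGraph.sum_degrees_eq_twice_card_edges]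
    have := htree.card_edgeFinset
    omega
  have hsumdegR : ∑ u : V, (G.degree u : ℝ) = 2 * (n : ℝ) - 2 := by
    rw [← Nat.cast_sum] at *
    rw [hsumdeg]
    push_cast [Nat.cast_sub (by omega : 1 ≤ n)]
    ring
  -- the three quantities
  set S : ℝ := (∑ u : V, (D.outDeg u : ℝ) ^ (1 + a)) + ∑ u : V, (D.inDeg u : ℝ) ^ (1 + a)
    with hSdef
  set T : ℝ := ∑ u : V, (G.degree u : ℝ) ^ (1 + a) with hTdef
  set M : ℝ := (n : ℝ) - 1 + ((n : ℝ) - 1) ^ (1 + a) with hMdef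
  have hrandic : D.randic a = (1 / 2) * S := D.randic_eq a hp0
  -- per-vertex inequality
  have hdegcast : ∀ u : V, (G.degree u : ℝ) = (D.outDeg u : ℝ) + (D.inDeg u : ℝ) := by
    intro u
    rw [D.degree_eq u]
    push_cast
    ring
  have htermwise : ∀ u : V,
      (D.outDeg u : ℝ) ^ (1 + a) + (D.inDeg u : ℝ) ^ (1 + a) ≤ (G.degree u : ℝ) ^ (1 + a) := by
    intro u
    rw [hdegcast u]
    exact rpow_superadd (Nat.cast_nonneg _) (Nat.cast_nonneg _) hp1
  have hST : S ≤ T := by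
    rw [hSdef, hTdef, ← Finset.sum_add_distrib]
    exact Finset.sum_le_sum fun u _ => htermwise u
  -- the convexity step
  set f : V → ℝ := fun u => (G.degree u : ℝ) - 1 with hfdef
  have hf0 : ∀ u ∈ Finset.univ, 0 ≤ f u := by
    intro u _
    have := hdeg1 u
    simp only [hfdef]
    have : (1 : ℝ) ≤ (G.degree u : ℝ) := by exact_mod_cast hdeg1 u
    linarith
  have hsumf : ∑ u : V, f u = (n : ℝ) - 2 := by
    simp only [hfdef]
    rw [Finset.sum_sub_distrib, hsumdegR, Finset.sum_const, Finset.card_univ, hn]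
    simp
    ring
  have hgsum : ∑ u : V, ((1 + f u) ^ (1 + a) - 1) = T - n := by
    rw [Finset.sum_sub_distrib, Finset.sum_const, Finset.card_univ, hn]
    have : ∀ u : V, (1 + f u) = (G.degree u : ℝ) := fun u => by simp [hfdef]
    rw [Finset.sum_congr rfl (fun u _ => by rw [this u])]
    simp [hTdef]
  have hgrhs : (1 + ∑ u : V, f u) ^ (1 + a) - 1 = ((n : ℝ) - 1) ^ (1 + a) - 1 := by
    rw [hsumf]
    ring_nf
  have hTM : T ≤ M := by
    have h := sum_g_le hp1 Finset.univ f hf0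
    rw [hgsum, hgrhs] at h
    rw [hMdef]
    linarith
  have hmain : D.randic a ≤ (1 / 2) * M := by
    rw [hrandic]
    have : S ≤ M := hST.trans hTM
    linarith
  refine ⟨hmain, ?_, ?_⟩
  · -- equality implies star
    intro heq
    have hSM : S = M := by
      rw [hrandic] at heq
      linarith
    have hSeqT : S = T := le_antisymm hST (by linarith)
    have hTeqM : T = M := by linarith
    -- sink-source at every vertex
    have hss : ∀ u : V, D.outDeg u = 0 ∨ D.inDeg u = 0 := by
      intro u
      by_contra hcon
      push_neg at hcon
      have ho : (0 : ℝ) < (D.outDeg u : ℝ) := by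
        exact_mod_cast Nat.pos_of_ne_zero hcon.1
      have hi : (0 : ℝ) < (D.inDeg u : ℝ) := by
        exact_mod_cast Nat.pos_of_ne_zero hcon.2
      have hstrict := rpow_superadd_strict ho hi hp1
      rw [← hdegcast u] at hstrict
      have hlt : S < T := by
        rw [hSdef, hTdef, ← Finset.sum_add_distrib]
        exact Finset.sum_lt_sum (fun v _ => htermwise v) ⟨u, Finset.mem_univ u, hstrict⟩
      linarith
    -- at most one vertex of degree ≥ 2
    have hgeq : ∑ u : V, ((1 + f u) ^ (1 + a) - 1) = (1 + ∑ u : V, f u) ^ (1 + a) - 1 := by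
      rw [hgsum, hgrhs, hTeqM, hMdef]
      ring
    have huniq : ∀ u v : V, u ≠ v → 2 ≤ G.degree u → 2 ≤ G.degree v → False := by
      intro u v huv h2u h2v
      refine sum_g_eq_unique hp1 Finset.univ f hf0 hgeq (Finset.mem_univ u)
        (Finset.mem_univ v) huv ?_ ?_
      · have : (2 : ℝ) ≤ (G.degree u : ℝ) := by exact_mod_cast h2u
        simp only [hfdef]; linarith
      · have : (2 : ℝ) ≤ (G.degree v : ℝ) := by exact_mod_cast h2v
        simp only [hfdef]; linarith
    -- find the center
    obtain ⟨c, hdegv⟩ : ∃ c : V, ∀ v : V, v ≠ c → G.degree v = 1 := by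
      by_cases hex : ∃ u : V, 2 ≤ G.degree u
      · obtain ⟨c, hc⟩ := hex
        refine ⟨c, fun v hv => ?_⟩
        have h1 := hdeg1 v
        by_contra hne
        have h2 : 2 ≤ G.degree v := by omega
        exact huniq v c hv h2 hc
      · push_neg at hex
        have : Nonempty V := Fintype.card_pos_iff.1 (by omega)
        obtain ⟨c⟩ := this
        exact ⟨c, fun v _ => by have := hdeg1 v; have := hex v; omega⟩
    -- degree of the center
    have hdegc : G.degree c = n - 1 := by
      have h1 : ∑ u : V, G.degree u = G.degree c + ∑ u ∈ Finset.univ.erase c, G.degree u :=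
        (Finset.add_sum_erase _ _ (Finset.mem_univ c)).symm
      have h2 : ∑ u ∈ Finset.univ.erase c, G.degree u = n - 1 := by
        rw [Finset.sum_congr rfl (fun u hu => hdegv u (Finset.mem_erase.1 hu).1),
          Finset.sum_const, Finset.card_erase_of_mem (Finset.mem_univ c), Finset.card_univ, hn]
        simp
      omega
    -- adjacency structure
    have hnbr : G.neighborFinset c = Finset.univ.erase c := by
      apply Finset.eq_of_subset_of_card_le
      · intro v hv
        rw [SimpleGraph.mem_neighborFinset] at hv
        exact Finset.mem_erase.2 ⟨(G.ne_of_adj hv).symm, Finset.mem_univ v⟩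
      · rw [Finset.card_erase_of_mem (Finset.mem_univ c), Finset.card_univ, hn,
          G.card_neighborFinset_eq_degree, hdegc]
    have hadjc : ∀ v : V, v ≠ c → G.Adj c v := by
      intro v hv
      have : v ∈ G.neighborFinset c := by
        rw [hnbr]
        exact Finset.mem_erase.2 ⟨hv, Finset.mem_univ v⟩
      exact (SimpleGraph.mem_neighborFinset _ _ _).1 this
    have hnadj : ∀ x y : V, x ≠ c → y ≠ c → ¬ G.Adj x y := by
      intro x y hx hy hxy
      have hdx : G.degree x = 1 := hdegv x hx
      have hcx : G.Adj x c := (hadjc x hx).symm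
      have hcy : c ≠ y := fun h => hy h.symm
      have hsub : ({c, y} : Finset V) ⊆ G.neighborFinset x := by
        intro z hz
        rw [SimpleGraph.mem_neighborFinset]
        rcases Finset.mem_insert.1 hz with h | h
        · subst h; exact hcx
        · rw [Finset.mem_singleton] at h; subst h; exact hxy
      have h2 : 2 ≤ G.degree x := by
        rw [← G.card_neighborFinset_eq_degree]
        calc 2 = ({c, y} : Finset V).card := by
                rw [Finset.card_insert_of_notMem (by simp [hcy]), Finset.card_singleton]
          _ ≤ (G.neighborFinset x).card := Finset.card_le_card hsub
      omega
    have hadjiff : ∀ x y : V, G.Adj x y ↔ ((x = c ∧ y ≠ c) ∨ (y = c ∧ x ≠ c)) := by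
      intro x y
      constructor
      · intro hxy
        by_cases hx : x = c
        · subst hx
          exact Or.inl ⟨rfl, (G.ne_of_adj hxy).symm⟩
        · by_cases hy : y = c
          · subst hy
            exact Or.inr ⟨rfl, hx⟩
          · exact absurd hxy (hnadj x y hx hy)
      · rintro (⟨h1, h2⟩ | ⟨h1, h2⟩)
        · subst h1; exact hadjc y h2
        · subst h1; exact (hadjc x h2).symm
    refine ⟨c, hadjiff, ?_⟩
    rcases hss c with h | h
    · -- no arcs out of c: all arcs into c
      right
      intro v hv
      rcases D.arc_total c v (hadjc v hv) with h1 | h1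
      · exact absurd h1 ((D.outDeg_eq_zero_iff c).1 h v)
      · exact h1
    · left
      intro v hv
      rcases D.arc_total c v (hadjc v hv) with h1 | h1
      · exact h1
      · exact absurd h1 ((D.inDeg_eq_zero_iff c).1 h v)
  · -- star implies equality
    rintro ⟨c, hadj, harc | harc⟩
    · have hiff := D.arc_iff_out hadj harc
      obtain ⟨h1, h2, h3, h4⟩ := D.star_out_degs hiff
      rw [hrandic, hSdef, sum_pow_single h2 hp0, sum_pow_ones h3 h4 hp0, h1, hn,
        Nat.cast_sub (by omega : 1 ≤ n)]
      push_cast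
      ring
    · have hiff := D.arc_iff_in hadj harc
      obtain ⟨h1, h2, h3, h4⟩ := D.star_in_degs hiff
      rw [hrandic, hSdef, sum_pow_ones h3 h4 hp0, sum_pow_single h2 hp0, h1, hn,
        Nat.cast_sub (by omega : 1 ≤ n)]
      push_cast
      ring
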